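/- Let q be a real number with q > 0 and q ≠ 1, let n be a natural number, and let f, g : ℝ → ℝ. Then for every real x ≠ 0 the general q-Leibniz rule holds: (∂_q^n(f·g))(x) = Σ_{k=0}^{n} [n choose k]_q · (∂_q^k f)(q^{n−k} x) · (∂_q^{n−k} g)(x). -/

import Mathlib

/-- The `q`-derivative: `(∂_q f)(x) = (f(qx) − f(x))/(x(q−1))` (zero at `x = 0`). -/
noncomputable def qDeriv (q : ℝ) (f : ℝ → ℝ) : ℝ → ℝ :=
  fun x => (f (q * x) - f x) / (x * (q - 1))

/-- The q-number `(m)_q = (q^m − 1)/(q − 1)` for an integer `m`. -/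
noncomputable def qNum (q : ℝ) (m : ℤ) : ℝ := (q ^ m - 1) / (q - 1)

/-- The q-factorial `(k)_q! = (k)_q (k−1)_q ⋯ (1)_q`, with `(0)_q! = 1`. -/
noncomputable def qFactorial (q : ℝ) (k : ℕ) : ℝ :=
  ∏ i ∈ Finset.range k, qNum q ((i : ℤ) + 1)

/-- The q-binomial coefficient `[n choose k]_q = (n)_q (n−1)_q ⋯ (n−k+1)_q / (k)_q!`. -/
noncomputable def qBinom (q : ℝ) (n : ℤ) (k : ℕ) : ℝ :=
  (∏ i ∈ Finset.range k, qNum q (n - (i : ℤ))) / qFactorial q k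

lemma pow_ne_one_of_pos (q : ℝ) (hq0 : 0 < q) (hq1 : q ≠ 1) (k : ℕ) (hk : k ≠ 0) :
    q ^ k ≠ 1 := by
  rcases lt_or_gt_of_ne hq1 with h | h
  · exact ne_of_lt (pow_lt_one₀ hq0.le h hk)
  · exact ne_of_gt (one_lt_pow₀ h hk)

lemma qNum_nat_ne_zero (q : ℝ) (hq0 : 0 < q) (hq1 : q ≠ 1) (k : ℕ) (hk : k ≠ 0) :
    qNum q (k : ℤ) ≠ 0 := by
  have h1 : q - 1 ≠ 0 := sub_ne_zero.mpr hq1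
  have : q ^ (k : ℤ) = q ^ k := zpow_natCast q k
  rw [qNum, this]
  exact div_ne_zero (sub_ne_zero.mpr (pow_ne_one_of_pos q hq0 hq1 k hk)) h1

lemma qFactorial_ne_zero (q : ℝ) (hq0 : 0 < q) (hq1 : q ≠ 1) (k : ℕ) :
    qFactorial q k ≠ 0 := by
  rw [qFactorial]
  apply Finset.prod_ne_zero_iff.mpr
  intro i _
  have : ((i : ℤ) + 1) = ((i + 1 : ℕ) : ℤ) := by push_cast; ring
  rw [this]
  exact qNum_nat_ne_zero q hq0 hq1 (i + 1) (Nat.succ_ne_zero i)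

lemma qNum_pascal (q : ℝ) (hq1 : q ≠ 1) (n k : ℕ) (hk : k ≤ n) :
    qNum q ((n : ℤ) + 1) = qNum q ((n : ℤ) - k) + q ^ (n - k) * qNum q ((k : ℤ) + 1) := by
  have h1 : q - 1 ≠ 0 := sub_ne_zero.mpr hq1
  rw [show ((n : ℤ) + 1) = ((n + 1 : ℕ) : ℤ) by push_cast; ring,
      show ((n : ℤ) - k) = ((n - k : ℕ) : ℤ) by omega,
      show ((k : ℤ) + 1) = ((k + 1 : ℕ) : ℤ) by push_cast; ring]
  simp only [qNum, zpow_natCast]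
  rw [show n + 1 = (n - k) + (k + 1) by omega, pow_add]
  field_simp
  ring

lemma qBinom_zero (q : ℝ) (n : ℤ) : qBinom q n 0 = 1 := by
  simp [qBinom, qFactorial]

lemma qBinom_succ_self (q : ℝ) (n : ℕ) : qBinom q (n : ℤ) (n + 1) = 0 := by
  rw [qBinom, Finset.prod_eq_zero (Finset.self_mem_range_succ n)]
  · simp
  · simp [qNum]

lemma qBinom_pascal (q : ℝ) (hq0 : 0 < q) (hq1 : q ≠ 1) (n k : ℕ) (hk : k ≤ n) :
    qBinom q ((n : ℤ) + 1) (k + 1) =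
      qBinom q (n : ℤ) (k + 1) + q ^ (n - k) * qBinom q (n : ℤ) k := by
  have hFk : qFactorial q k ≠ 0 := qFactorial_ne_zero q hq0 hq1 k
  have hNk : qNum q ((k : ℤ) + 1) ≠ 0 := by
    rw [show ((k : ℤ) + 1) = ((k + 1 : ℕ) : ℤ) by push_cast; ring]
    exact qNum_nat_ne_zero q hq0 hq1 (k + 1) (Nat.succ_ne_zero k)
  have hFk1 : qFactorial q (k + 1) = qFactorial q k * qNum q ((k : ℤ) + 1) := by
    rw [qFactorial, Finset.prod_range_succ, qFactorial]
  have hP1 : (∏ i ∈ Finset.range (k + 1), qNum q (((n : ℤ) + 1) - (i : ℤ))) =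
      (∏ i ∈ Finset.range k, qNum q ((n : ℤ) - (i : ℤ))) * qNum q ((n : ℤ) + 1) := by
    rw [Finset.prod_range_succ']
    congr 1
    · apply Finset.prod_congr rfl
      intro i _
      congr 1
      push_cast
      ring
  have hP2 : (∏ i ∈ Finset.range (k + 1), qNum q ((n : ℤ) - (i : ℤ))) =
      (∏ i ∈ Finset.range k, qNum q ((n : ℤ) - (i : ℤ))) * qNum q ((n : ℤ) - k) := by
    rw [Finset.prod_range_succ]
  rw [qBinom, qBinom, qBinom, hP1, hP2, hFk1, qNum_pascal q hq1 n k hk]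
  field_simp

lemma sum_pascal (q : ℝ) (hq0 : 0 < q) (hq1 : q ≠ 1) (n : ℕ) (T : ℕ → ℝ) :
    (∑ k ∈ Finset.range (n + 1), qBinom q (n : ℤ) k * T k) +
      (∑ k ∈ Finset.range (n + 1), q ^ (n - k) * qBinom q (n : ℤ) k * T (k + 1)) =
    ∑ k ∈ Finset.range (n + 2), qBinom q ((n : ℤ) + 1) k * T k := by
  rw [show n + 2 = (n + 1) + 1 from rfl,
    Finset.sum_range_succ' (fun k => qBinom q ((n : ℤ) + 1) k * T k) (n + 1)]
  have h1 : ∀ k ∈ Finset.range (n + 1), qBinom q ((n : ℤ) + 1) (k + 1) * T (k + 1)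
      = qBinom q (n : ℤ) (k + 1) * T (k + 1) + q ^ (n - k) * qBinom q (n : ℤ) k * T (k + 1) := by
    intro k hk
    rw [qBinom_pascal q hq0 hq1 n k (Nat.lt_succ_iff.mp (Finset.mem_range.mp hk))]
    ring
  rw [Finset.sum_congr rfl h1, Finset.sum_add_distrib, qBinom_zero]
  have h2 : (∑ k ∈ Finset.range (n + 1), qBinom q (n : ℤ) k * T k)
      = (∑ k ∈ Finset.range (n + 1), qBinom q (n : ℤ) (k + 1) * T (k + 1)) + T 0 := by
    rw [Finset.sum_range_succ (fun k => qBinom q (n : ℤ) (k + 1) * T (k + 1)),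
      qBinom_succ_self,
      Finset.sum_range_succ' (fun k => qBinom q (n : ℤ) k * T k), qBinom_zero]
    ring
  rw [h2]; ring


/-- The general q-Leibniz rule:
`(∂_q^n(f·g))(x) = Σ_{k=0}^{n} [n choose k]_q (∂_q^k f)(q^{n−k} x) (∂_q^{n−k} g)(x)`. -/
theorem qDeriv_iterate_mul (q : ℝ) (hq0 : 0 < q) (hq1 : q ≠ 1) (n : ℕ) (f g : ℝ → ℝ) :
    ∀ x : ℝ, x ≠ 0 →
      (qDeriv q)^[n] (fun y => f y * g y) x =
        ∑ k ∈ Finset.range (n + 1),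
          qBinom q (n : ℤ) k * (qDeriv q)^[k] f (q ^ (n - k) * x) * (qDeriv q)^[n - k] g x := by
  induction n with
  | zero => intro x hx; simp [qBinom_zero]
  | succ n ih =>
    intro x hx
    have hqne : q ≠ 0 := ne_of_gt hq0
    have h1 : q - 1 ≠ 0 := sub_ne_zero.mpr hq1
    rw [Function.iterate_succ_apply']
    show ((qDeriv q)^[n] (fun y => f y * g y) (q * x)
        - (qDeriv q)^[n] (fun y => f y * g y) x) / (x * (q - 1)) = _
    rw [ih (q * x) (mul_ne_zero hqne hx), ih x hx, ← Finset.sum_sub_distrib, Finset.sum_div]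
    have step : ∀ k ∈ Finset.range (n + 1),
        (qBinom q (n : ℤ) k * (qDeriv q)^[k] f (q ^ (n - k) * (q * x)) * (qDeriv q)^[n - k] g (q * x)
          - qBinom q (n : ℤ) k * (qDeriv q)^[k] f (q ^ (n - k) * x) * (qDeriv q)^[n - k] g x)
            / (x * (q - 1))
        = qBinom q (n : ℤ) k *
            ((qDeriv q)^[k] f (q ^ (n + 1 - k) * x) * (qDeriv q)^[n + 1 - k] g x)
          + q ^ (n - k) * qBinom q (n : ℤ) k *
            ((qDeriv q)^[k + 1] f (q ^ (n + 1 - (k + 1)) * x)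
              * (qDeriv q)^[n + 1 - (k + 1)] g x) := by
      intro k hk
      have hkn : k ≤ n := Nat.lt_succ_iff.mp (Finset.mem_range.mp hk)
      have e1 : n + 1 - k = (n - k) + 1 := by omega
      have e2 : n + 1 - (k + 1) = n - k := by omega
      rw [e1, e2, Function.iterate_succ_apply' (qDeriv q) (n - k) g,
        Function.iterate_succ_apply' (qDeriv q) k f]
      show _ = qBinom q (n : ℤ) k * ((qDeriv q)^[k] f (q ^ ((n - k) + 1) * x) *
            (((qDeriv q)^[n - k] g (q * x) - (qDeriv q)^[n - k] g x) / (x * (q - 1))))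
          + q ^ (n - k) * qBinom q (n : ℤ) k *
            ((((qDeriv q)^[k] f (q * (q ^ (n - k) * x)) - (qDeriv q)^[k] f (q ^ (n - k) * x))
              / ((q ^ (n - k) * x) * (q - 1))) * (qDeriv q)^[n - k] g x)
      rw [show q ^ ((n - k) + 1) * x = q * (q ^ (n - k) * x) by rw [pow_succ]; ring,
        show q ^ (n - k) * (q * x) = q * (q ^ (n - k) * x) by ring]
      field_simp
      ring
    rw [Finset.sum_congr rfl step, Finset.sum_add_distrib,
      sum_pascal q hq0 hq1 n
        (fun k => (qDeriv q)^[k] f (q ^ (n + 1 - k) * x) * (qDeriv q)^[n + 1 - k] g x)]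
    apply Finset.sum_congr rfl
    intro k _
    push_cast
    ring
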